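/- Let G_{K₂} be the graph on vertices {v₁, v₂, v₃, v₄, u, w} with edges v₁u, uv₂, uw, v₂v₄, v₁v₃, v₃w, wv₄. Let G be a finite simple graph with at least one vertex, disjoint from G_{K₂}, and let H_G be the disjoint union of G_{K₂} and G together with all edges v_i x for x ∈ V(G) and i = 1, 2, 3, 4. Then the maximal independent sets of H_G are exactly: {v₁, v₄}, {v₂, v₃}, {v₁, v₂, w}, {v₃, v₄, u}, and the sets {u} ∪ M and {w} ∪ M where M ranges over maximal independent sets of G. -/

import Mathlib

/-- `M` is an independent set of `G` (as a finset): pairwise non-adjacent vertices. -/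
def IsIndepF {V : Type*} (G : SimpleGraph V) (M : Finset V) : Prop :=
  ∀ v ∈ M, ∀ w ∈ M, ¬ G.Adj v w

/-- `M` is a maximal independent set of `G`: independent and not properly contained
in any other independent set. -/
def IsMaxIndepF {V : Type*} (G : SimpleGraph V) (M : Finset V) : Prop :=
  IsIndepF G M ∧ ∀ M' : Finset V, IsIndepF G M' → M ⊆ M' → M' = M

/-- The well-covered space of `G` over `F`: all weightings `w : V → F` whose sum over
every maximal independent set of `G` is the same constant. -/
def wcSpace (F : Type*) [Field F] {V : Type*} (G : SimpleGraph V) : Submodule F (V → F) where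
  carrier := {w | ∀ M N : Finset V, IsMaxIndepF G M → IsMaxIndepF G N →
    ∑ v ∈ M, w v = ∑ v ∈ N, w v}
  add_mem' := by
    intro a b ha hb M N hM hN
    simp only [Pi.add_apply, Finset.sum_add_distrib, ha M N hM hN, hb M N hM hN]
  zero_mem' := by intro M N _ _; simp
  smul_mem' := by
    intro c a ha M N hM hN
    simp only [Pi.smul_apply, smul_eq_mul, ← Finset.mul_sum, ha M N hM hN]

/-- The well-covered dimension of `G` over `F`. -/
noncomputable def wcdim (F : Type*) [Field F] {V : Type*} (G : SimpleGraph V) : ℕ :=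
  Module.finrank F (wcSpace F G)

/-- Edge list of the graph `G_{K₂}`: vertices `v₁ v₂ v₃ v₄ u w = 0 1 2 3 4 5`, edges
`v₁u, uv₂, uw, v₂v₄, v₁v₃, v₃w, wv₄`. -/
def GK2edges : List (Fin 6 × Fin 6) :=
  [(0, 4), (4, 1), (4, 5), (1, 3), (0, 2), (2, 5), (5, 3)]

/-- The graph `G_{K₂}`. -/
def GK2 : SimpleGraph (Fin 6) :=
  SimpleGraph.fromRel fun x y => (x, y) ∈ GK2edges

/-- `H_G`: the disjoint union of `G_{K₂}` and `G`, with every edge `vᵢ x`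
(`x ∈ V(G)`, `i = 1, 2, 3, 4`) added. -/
def HG {V : Type*} (G : SimpleGraph V) : SimpleGraph (Fin 6 ⊕ V) :=
  SimpleGraph.fromRel fun x y =>
    match x, y with
    | Sum.inl a, Sum.inl b => (a, b) ∈ GK2edges
    | Sum.inl a, Sum.inr _ => a = 0 ∨ a = 1 ∨ a = 2 ∨ a = 3
    | Sum.inr _, Sum.inl b => b = 0 ∨ b = 1 ∨ b = 2 ∨ b = 3
    | Sum.inr x, Sum.inr y => G.Adj x y

open Sum Finset

lemma adj_ll {V : Type*} (G : SimpleGraph V) (a b : Fin 6) :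
    (HG G).Adj (inl a) (inl b) ↔ GK2.Adj a b := by
  simp [HG, GK2, SimpleGraph.fromRel_adj]

lemma adj_lr {V : Type*} (G : SimpleGraph V) (a : Fin 6) (x : V) :
    (HG G).Adj (inl a) (inr x) ↔ (a = 0 ∨ a = 1 ∨ a = 2 ∨ a = 3) := by
  simp [HG, SimpleGraph.fromRel_adj]

lemma adj_rl {V : Type*} (G : SimpleGraph V) (a : Fin 6) (x : V) :
    (HG G).Adj (inr x) (inl a) ↔ (a = 0 ∨ a = 1 ∨ a = 2 ∨ a = 3) := by
  rw [SimpleGraph.adj_comm]; exact adj_lr G a x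

lemma adj_rr {V : Type*} (G : SimpleGraph V) (x y : V) :
    (HG G).Adj (inr x) (inr y) ↔ G.Adj x y := by
  constructor
  · rintro ⟨hne, h | h⟩
    · exact h
    · exact h.symm
  · intro h; exact ⟨by simp [h.ne], Or.inl h⟩

instance : DecidableRel GK2.Adj := fun a b =>
  decidable_of_iff (a ≠ b ∧ ((a,b) ∈ GK2edges ∨ (b,a) ∈ GK2edges))
    (by rw [GK2, SimpleGraph.fromRel_adj])

set_option synthInstance.maxHeartbeats 400000 in
set_option synthInstance.maxSize 1000 in
lemma fin6_case : ∀ T : Finset (Fin 6),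
    (∀ a ∈ T, ∀ b ∈ T, ¬ GK2.Adj a b) →
    (∀ b, b ∉ T → ∃ a ∈ T, GK2.Adj a b) →
    (∃ a ∈ T, a = 0 ∨ a = 1 ∨ a = 2 ∨ a = 3) →
    T = {0,3} ∨ T = {1,2} ∨ T = {0,1,5} ∨ T = {2,3,4} := by decide

/-- maximal independent sets dominate. -/
lemma maxIndep_dom {W : Type*} [DecidableEq W] {G : SimpleGraph W} {S : Finset W}
    (h : IsMaxIndepF G S) {v : W} (hv : v ∉ S) : ∃ u ∈ S, G.Adj u v := by
  by_contra hc
  push_neg at hc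
  have hind : IsIndepF G (insert v S) := by
    intro a ha b hb
    rcases Finset.mem_insert.1 ha with ha' | ha'
    · rcases Finset.mem_insert.1 hb with hb' | hb'
      · subst ha'; subst hb'; exact G.irrefl
      · subst ha'; intro hadj; exact hc b hb' hadj.symm
    · rcases Finset.mem_insert.1 hb with hb' | hb'
      · subst hb'; exact hc a ha'
      · exact h.1 a ha' b hb'
  have := h.2 _ hind (Finset.subset_insert v S)
  exact hv (this ▸ Finset.mem_insert_self v S)

lemma maxIndep_nonempty {W : Type*} [DecidableEq W] [Nonempty W] {G : SimpleGraph W}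
    {S : Finset W} (h : IsMaxIndepF G S) : S.Nonempty := by
  rcases S.eq_empty_or_nonempty with rfl | hne
  · obtain ⟨v⟩ := ‹Nonempty W›
    have hind : IsIndepF G {v} := by
      intro a ha b hb
      simp only [Finset.mem_singleton] at ha hb
      subst ha; subst hb; exact G.irrefl
    have := h.2 {v} hind (Finset.empty_subset _)
    simp at this
  · exact hne

/-- backward: concrete `Fin 6` sets are maximal independent in `HG G`. -/
lemma concrete_max {V : Type*} [Fintype V] [DecidableEq V] [Nonempty V]
    (G : SimpleGraph V) (T : Finset (Fin 6))
    (h1 : ∀ a ∈ T, ∀ b ∈ T, ¬ GK2.Adj a b)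
    (h2 : ∀ b, b ∉ T → ∃ a ∈ T, GK2.Adj a b)
    (h3 : ∃ a ∈ T, a = 0 ∨ a = 1 ∨ a = 2 ∨ a = 3) :
    IsMaxIndepF (HG G) (T.image inl) := by
  constructor
  · intro s hs t ht
    obtain ⟨a, ha, rfl⟩ := Finset.mem_image.1 hs
    obtain ⟨b, hb, rfl⟩ := Finset.mem_image.1 ht
    rw [adj_ll]; exact h1 a ha b hb
  · intro M' hM' hsub
    refine Finset.Subset.antisymm (fun s hs => ?_) hsub
    match s with
    | inl b =>
      by_cases hb : b ∈ T
      · exact Finset.mem_image.2 ⟨b, hb, rfl⟩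
      · obtain ⟨a, ha, hadj⟩ := h2 b hb
        exact absurd ((adj_ll G a b).2 hadj)
          (hM' _ (hsub (Finset.mem_image.2 ⟨a, ha, rfl⟩)) _ hs)
    | inr x =>
      obtain ⟨a, ha, ha4⟩ := h3
      exact absurd ((adj_lr G a x).2 ha4)
        (hM' _ (hsub (Finset.mem_image.2 ⟨a, ha, rfl⟩)) _ hs)

/-- backward: `{u or w} ∪ M` is maximal independent in `HG G`. -/
lemma uw_max {V : Type*} [Fintype V] [DecidableEq V] [Nonempty V]
    (G : SimpleGraph V) (c : Fin 6) (hc : c = 4 ∨ c = 5) {M : Finset V}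
    (hM : IsMaxIndepF G M) :
    IsMaxIndepF (HG G) (insert (inl c) (M.image inr)) := by
  have hcne : ∀ x : V, ¬ (HG G).Adj (inl c) (inr x) := by
    intro x h
    rw [adj_lr] at h
    rcases hc with rfl | rfl <;> simp at h
  constructor
  · intro s hs t ht
    rcases Finset.mem_insert.1 hs with rfl | hs
    · rcases Finset.mem_insert.1 ht with rfl | ht
      · exact (HG G).irrefl
      · obtain ⟨x, _, rfl⟩ := Finset.mem_image.1 ht
        exact hcne x
    · obtain ⟨x, hx, rfl⟩ := Finset.mem_image.1 hs
      rcases Finset.mem_insert.1 ht with rfl | ht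
      · intro h; exact hcne x h.symm
      · obtain ⟨y, hy, rfl⟩ := Finset.mem_image.1 ht
        rw [adj_rr]; exact hM.1 x hx y hy
  · intro M' hM' hsub
    have hcM' : inl c ∈ M' := hsub (Finset.mem_insert_self _ _)
    obtain ⟨x0, hx0⟩ := maxIndep_nonempty hM
    have hx0M' : (inr x0 : Fin 6 ⊕ V) ∈ M' :=
      hsub (Finset.mem_insert_of_mem (Finset.mem_image.2 ⟨x0, hx0, rfl⟩))
    refine Finset.Subset.antisymm (fun s hs => ?_) hsub
    match s with
    | inl b =>
      by_cases hb : b = c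
      · subst hb; exact Finset.mem_insert_self _ _
      · exfalso
        by_cases hb4 : b = 0 ∨ b = 1 ∨ b = 2 ∨ b = 3
        · exact hM' _ hs _ hx0M' ((adj_lr G b x0).2 hb4)
        · have hbc : GK2.Adj b c := by
            rcases hc with rfl | rfl <;> fin_cases b <;> simp_all <;> decide
          exact hM' _ hs _ hcM' ((adj_ll G b c).2 hbc)
    | inr x =>
      by_cases hx : x ∈ M
      · exact Finset.mem_insert_of_mem (Finset.mem_image.2 ⟨x, hx, rfl⟩)
      · exfalso
        obtain ⟨y, hy, hadj⟩ := maxIndep_dom hM hx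
        exact hM' _ (hsub (Finset.mem_insert_of_mem (Finset.mem_image.2 ⟨y, hy, rfl⟩)))
          _ hs ((adj_rr G y x).2 hadj)

/-- The maximal independent sets of `H_G` are exactly `{v₁,v₄}`, `{v₂,v₃}`, `{v₁,v₂,w}`,
`{v₃,v₄,u}`, and `{u} ∪ M`, `{w} ∪ M` for `M` a maximal independent set of `G`. -/
theorem maxIndep_HG {V : Type*} [Fintype V] [DecidableEq V] [Nonempty V]
    (G : SimpleGraph V) (S : Finset (Fin 6 ⊕ V)) :
    IsMaxIndepF (HG G) S ↔
      S = {Sum.inl 0, Sum.inl 3} ∨ S = {Sum.inl 1, Sum.inl 2} ∨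
      S = {Sum.inl 0, Sum.inl 1, Sum.inl 5} ∨ S = {Sum.inl 2, Sum.inl 3, Sum.inl 4} ∨
      (∃ M : Finset V, IsMaxIndepF G M ∧
        (S = insert (Sum.inl 4) (M.image Sum.inr) ∨
         S = insert (Sum.inl 5) (M.image Sum.inr))) := by
  constructor
  · intro hS
    by_cases hR : ∃ x : V, inr x ∈ S
    · -- case A: S contains a vertex of G
      obtain ⟨x0, hx0⟩ := hR
      have hno : ∀ a : Fin 6, (a = 0 ∨ a = 1 ∨ a = 2 ∨ a = 3) → inl a ∉ S := by
        intro a ha haS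
        exact hS.1 _ haS _ hx0 ((adj_lr G a x0).2 ha)
      set M : Finset V := S.preimage inr (Set.injOn_of_injective inr_injective) with hMdef
      have hMmem : ∀ x : V, x ∈ M ↔ (inr x : Fin 6 ⊕ V) ∈ S := fun x => Finset.mem_preimage
      -- one of inl 4, inl 5 is in S
      have h45 : inl 4 ∈ S ∨ inl 5 ∈ S := by
        by_contra hc
        push_neg at hc
        have honlyR : ∀ s ∈ S, ∃ x : V, s = inr x := by
          intro s hs
          match s with
          | inr x => exact ⟨x, rfl⟩
          | inl a =>
            exfalso
            fin_cases a
            · exact hno 0 (by simp) hs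
            · exact hno 1 (by simp) hs
            · exact hno 2 (by simp) hs
            · exact hno 3 (by simp) hs
            · exact hc.1 hs
            · exact hc.2 hs
        have hind : IsIndepF (HG G) (insert (inl 4) S) := by
          intro s hs t ht
          rcases Finset.mem_insert.1 hs with rfl | hs
          · rcases Finset.mem_insert.1 ht with rfl | ht
            · exact (HG G).irrefl
            · obtain ⟨x, rfl⟩ := honlyR t ht
              rw [adj_lr]; simp
          · rcases Finset.mem_insert.1 ht with rfl | ht
            · obtain ⟨x, rfl⟩ := honlyR s hs
              rw [adj_rl]; simp
            · exact hS.1 s hs t ht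
        have := hS.2 _ hind (Finset.subset_insert _ S)
        have h4 : (inl 4 : Fin 6 ⊕ V) ∈ S := this ▸ Finset.mem_insert_self _ _
        exact hc.1 h4
      obtain ⟨c, hc45, hcS⟩ : ∃ c : Fin 6, (c = 4 ∨ c = 5) ∧ inl c ∈ S := by
        rcases h45 with h | h
        · exact ⟨4, Or.inl rfl, h⟩
        · exact ⟨5, Or.inr rfl, h⟩
      have hSeq : S = insert (inl c) (M.image inr) := by
        ext s
        constructor
        · intro hs
          match s with
          | inr x =>
            exact Finset.mem_insert_of_mem (Finset.mem_image.2 ⟨x, (hMmem x).2 hs, rfl⟩)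
          | inl b =>
            by_cases hb : b = c
            · subst hb; exact Finset.mem_insert_self _ _
            · exfalso
              by_cases hb4 : b = 0 ∨ b = 1 ∨ b = 2 ∨ b = 3
              · exact hno b hb4 hs
              · have hbc : GK2.Adj b c := by
                  rcases hc45 with rfl | rfl <;> fin_cases b <;> simp_all <;> decide
                exact hS.1 _ hs _ hcS ((adj_ll G b c).2 hbc)
        · intro hs
          rcases Finset.mem_insert.1 hs with rfl | hs
          · exact hcS
          · obtain ⟨x, hx, rfl⟩ := Finset.mem_image.1 hs
            exact (hMmem x).1 hx
      have hMmax : IsMaxIndepF G M := by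
        constructor
        · intro x hx y hy hadj
          exact hS.1 _ ((hMmem x).1 hx) _ ((hMmem y).1 hy) ((adj_rr G x y).2 hadj)
        · intro M' hM' hsub
          have hind : IsIndepF (HG G) (insert (inl c) (M'.image inr)) := by
            intro s hs t ht
            have hcne : ∀ x : V, ¬ (HG G).Adj (inl c) (inr x) := by
              intro x h
              rw [adj_lr] at h
              rcases hc45 with rfl | rfl <;> simp at h
            rcases Finset.mem_insert.1 hs with rfl | hs
            · rcases Finset.mem_insert.1 ht with rfl | ht
              · exact (HG G).irrefl
              · obtain ⟨x, _, rfl⟩ := Finset.mem_image.1 ht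
                exact hcne x
            · obtain ⟨x, hx, rfl⟩ := Finset.mem_image.1 hs
              rcases Finset.mem_insert.1 ht with rfl | ht
              · intro h; exact hcne x h.symm
              · obtain ⟨y, hy, rfl⟩ := Finset.mem_image.1 ht
                rw [adj_rr]; exact hM' x hx y hy
          have hsub' : S ⊆ insert (inl c) (M'.image inr) := by
            rw [hSeq]
            exact Finset.insert_subset_insert _ (Finset.image_subset_image hsub)
          have heq := hS.2 _ hind hsub'
          refine Finset.Subset.antisymm (fun x hx => ?_) hsub
          have : (inr x : Fin 6 ⊕ V) ∈ S := by
            rw [← heq]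
            exact Finset.mem_insert_of_mem (Finset.mem_image.2 ⟨x, hx, rfl⟩)
          exact (hMmem x).2 this
      refine Or.inr (Or.inr (Or.inr (Or.inr ⟨M, hMmax, ?_⟩)))
      rcases hc45 with rfl | rfl
      · exact Or.inl hSeq
      · exact Or.inr hSeq
    · -- case B: S ⊆ inl vertices
      push_neg at hR
      set T : Finset (Fin 6) := S.preimage inl (Set.injOn_of_injective inl_injective) with hTdef
      have hTmem : ∀ a : Fin 6, a ∈ T ↔ (inl a : Fin 6 ⊕ V) ∈ S := fun a => Finset.mem_preimage
      have hSeq : S = T.image inl := by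
        ext s
        constructor
        · intro hs
          match s with
          | inl a => exact Finset.mem_image.2 ⟨a, (hTmem a).2 hs, rfl⟩
          | inr x => exact absurd hs (hR x)
        · intro hs
          obtain ⟨a, ha, rfl⟩ := Finset.mem_image.1 hs
          exact (hTmem a).1 ha
      have h1 : ∀ a ∈ T, ∀ b ∈ T, ¬ GK2.Adj a b := by
        intro a ha b hb hadj
        exact hS.1 _ ((hTmem a).1 ha) _ ((hTmem b).1 hb) ((adj_ll G a b).2 hadj)
      have h2 : ∀ b, b ∉ T → ∃ a ∈ T, GK2.Adj a b := by
        intro b hb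
        obtain ⟨u, hu, hadj⟩ := maxIndep_dom hS (fun h => hb ((hTmem b).2 h))
        match u with
        | inl a => exact ⟨a, (hTmem a).2 hu, (adj_ll G a b).1 hadj⟩
        | inr x => exact absurd hu (hR x)
      have h3 : ∃ a ∈ T, a = 0 ∨ a = 1 ∨ a = 2 ∨ a = 3 := by
        obtain ⟨x0⟩ := ‹Nonempty V›
        obtain ⟨u, hu, hadj⟩ := maxIndep_dom hS (hR x0)
        match u with
        | inl a => exact ⟨a, (hTmem a).2 hu, (adj_lr G a x0).1 hadj⟩
        | inr x => exact absurd hu (hR x)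
      rcases fin6_case T h1 h2 h3 with h | h | h | h <;> rw [h] at hSeq <;>
        simp only [Finset.image_insert, Finset.image_singleton] at hSeq
      · exact Or.inl hSeq
      · exact Or.inr (Or.inl hSeq)
      · exact Or.inr (Or.inr (Or.inl hSeq))
      · exact Or.inr (Or.inr (Or.inr (Or.inl hSeq)))
  · rintro (rfl | rfl | rfl | rfl | ⟨M, hM, rfl | rfl⟩)
    · have := concrete_max G {0, 3} (by decide) (by decide) (by decide)
      simpa using this
    · have := concrete_max G {1, 2} (by decide) (by decide) (by decide)
      simpa using this
    · have := concrete_max G {0, 1, 5} (by decide) (by decide) (by decide)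
      simpa using this
    · have := concrete_max G {2, 3, 4} (by decide) (by decide) (by decide)
      simpa using this
    · exact uw_max G 4 (Or.inl rfl) hM
    · exact uw_max G 5 (Or.inr rfl) hM
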